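/- Let (α,ρ) be a lifting pair of a coupling ᾱ: B → Out_D(L), and let λ = d_α ρ ∈ Ω_B³(Z(L)). Then d_{ᾱ} λ = 0; i.e., λ is a 3-cocycle in the complex (Ω_B^•(Z(L)), d_{ᾱ}) of Z(L)-valued B-forms with respect to the induced representation of B on the center Z(L). -/

import Mathlib

/-- The order-preserving inclusion `Fin (n-1) → Fin n` skipping the index `j`. -/
def skipIdx {n : ℕ} (j : Fin n) (m : Fin (n - 1)) : Fin n :=
  if (m : ℕ) < (j : ℕ) then ⟨m, by have := m.isLt; omega⟩
  else ⟨(m : ℕ) + 1, by have := m.isLt; omega⟩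

/-- The Chevalley–Eilenberg/de Rham differential of an `M`-valued `p`-form on a Lie
algebroid `B`, twisted by a connection `α : B → (M → M)`. -/
def dform {B M : Type*} [LieRing B] [AddCommGroup M]
    (α : B → M → M) (p : ℕ) (ξ : (Fin p → B) → M) :
    (Fin (p + 1) → B) → M :=
  fun s =>
    (∑ i : Fin (p + 1), ((-1 : ℤ) ^ (i : ℕ)) • α (s i) (ξ (s ∘ i.succAbove))) +
      ∑ i : Fin (p + 1), ∑ j : Fin p,
        if (i : ℕ) ≤ (j : ℕ) then
          ((-1 : ℤ) ^ ((i : ℕ) + (j : ℕ) + 1)) •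
            ξ (fun m : Fin p =>
              if hm : (m : ℕ) = 0 then ⁅s i, s (i.succAbove j)⁆
              else s (i.succAbove (skipIdx j ⟨(m : ℕ) - 1, by have := m.isLt; omega⟩)))
        else 0

lemma dite_eta2 {B : Type*} (x : B) (g : (m : Fin 2) → ¬(m : ℕ) = 0 → B) :
    (fun m : Fin 2 => dite ((m : ℕ) = 0) (fun _ => x) (g m)) = ![x, g 1 (by norm_num)] := by
  funext m; fin_cases m
  · rfl
  · show g 1 _ = g 1 _; congr 1

lemma dite_eta3 {B : Type*} (x : B) (g : (m : Fin 3) → ¬(m : ℕ) = 0 → B) :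
    (fun m : Fin 3 => dite ((m : ℕ) = 0) (fun _ => x) (g m)) =
      ![x, g 1 (by norm_num), g 2 (by norm_num)] := by
  funext m; fin_cases m
  · rfl
  · show g 1 _ = g 1 _; congr 1
  · show g 2 _ = g 2 _; congr 1

lemma comp_eta2 {B : Type*} (s : Fin (2+1) → B) (g : Fin 2 → Fin (2+1)) :
    s ∘ g = ![s (g 0), s (g 1)] := by
  funext m; fin_cases m <;> rfl

lemma comp_eta3 {B : Type*} (s : Fin (3+1) → B) (g : Fin 3 → Fin (3+1)) :
    s ∘ g = ![s (g 0), s (g 1), s (g 2)] := by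
  funext m; fin_cases m <;> rfl

lemma dform2 {B M : Type*} [LieRing B] [AddCommGroup M]
    (α : B → M → M) (ξ : (Fin 2 → B) → M) (s : Fin 3 → B) :
    dform α 2 ξ s = α (s 0) (ξ ![s 1, s 2]) - α (s 1) (ξ ![s 0, s 2]) + α (s 2) (ξ ![s 0, s 1])
      - ξ ![⁅s 0, s 1⁆, s 2] + ξ ![⁅s 0, s 2⁆, s 1] - ξ ![⁅s 1, s 2⁆, s 0] := by
  simp only [dform, Fin.sum_univ_three, Fin.sum_univ_succ, Fin.sum_univ_zero]
  simp only [dite_eta2, comp_eta2]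
  norm_num [skipIdx, Fin.succAbove, Fin.lt_def]
  abel

set_option maxHeartbeats 1000000 in
lemma dform3 {B M : Type*} [LieRing B] [AddCommGroup M]
    (α : B → M → M) (ξ : (Fin 3 → B) → M) (s : Fin 4 → B) :
    dform α 3 ξ s =
      α (s 0) (ξ ![s 1, s 2, s 3]) - α (s 1) (ξ ![s 0, s 2, s 3])
      + α (s 2) (ξ ![s 0, s 1, s 3]) - α (s 3) (ξ ![s 0, s 1, s 2])
      - ξ ![⁅s 0, s 1⁆, s 2, s 3] + ξ ![⁅s 0, s 2⁆, s 1, s 3] - ξ ![⁅s 0, s 3⁆, s 1, s 2]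
      - ξ ![⁅s 1, s 2⁆, s 0, s 3] + ξ ![⁅s 1, s 3⁆, s 0, s 2] - ξ ![⁅s 2, s 3⁆, s 0, s 1] := by
  simp only [dform, Fin.sum_univ_four, Fin.sum_univ_three, Fin.sum_univ_succ, Fin.sum_univ_zero]
  simp only [dite_eta3, comp_eta3]
  norm_num [skipIdx, Fin.succAbove, Fin.lt_def]
  abel

section helpers

lemma update_cons_zero {B : Type*} (w z x : B) :
    Function.update ![w, z] 0 x = ![x, z] := by
  funext m; fin_cases m <;> simp [Function.update]

lemma jac_lie {B : Type*} [LieRing B] (a b c : B) :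
    ⁅⁅a, b⁆, c⁆ = ⁅⁅a, c⁆, b⁆ - ⁅⁅b, c⁆, a⁆ := by
  have h := lie_jacobi a b c
  rw [← lie_skew c a, lie_neg] at h
  -- h : ⁅a,⁅b,c⁆⁆ + -⁅b,⁅a,c⁆⁆ + ⁅c,⁅a,b⁆⁆ = 0
  have h3 : ⁅c, ⁅a, b⁆⁆ + (⁅a, ⁅b, c⁆⁆ - ⁅b, ⁅a, c⁆⁆) = 0 := by rw [← h]; abel
  have h2 : ⁅c, ⁅a, b⁆⁆ = ⁅b, ⁅a, c⁆⁆ - ⁅a, ⁅b, c⁆⁆ := by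
    have h4 := eq_neg_of_add_eq_zero_left h3
    rw [h4]; abel
  rw [← lie_skew ⁅a, b⁆ c, ← lie_skew ⁅a, c⁆ b, ← lie_skew ⁅b, c⁆ a, h2]
  abel

end helpers

/-- Let `(α, ρ)` be a lifting pair of a coupling `ᾱ : B → Out_D(L)`
and `λ = d_α ρ ∈ Ω_B³(Z(L))`.  Then `d_ᾱ λ = 0`: since `λ` is central-valued, the
differential of the induced representation of `B` on `Z(L)` is computed by any lift
`α` of `ᾱ`, so `λ` is a 3-cocycle of the complex `(Ω_B^•(Z(L)), d_ᾱ)`. -/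
theorem lifting_pair_dρ_is_cocycle
    {k : Type*} [Field k] {R : Type*} [CommRing R] [Algebra k R]
    {B : Type*} [LieRing B] [LieAlgebra k B] [Module R B] [IsScalarTower k R B]
    {L : Type*} [LieRing L] [LieAlgebra k L] [LieAlgebra R L] [IsScalarTower k R L]
    (a : B →ₗ[R] Derivation k R R)
    (hLeibB : ∀ (s t : B) (f : R), ⁅s, f • t⁆ = f • ⁅s, t⁆ + a s f • t)
    (α : B → L →ₗ[k] L)
    (hadd : ∀ b b' : B, α (b + b') = α b + α b')
    (hsmul : ∀ (f : R) (b : B) (l : L), α (f • b) l = f • α b l)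
    (hD : ∀ (b : B) (l l' : L), α b ⁅l, l'⁆ = ⁅α b l, l'⁆ + ⁅l, α b l'⁆)
    (hLeibα : ∀ (b : B) (f : R) (l : L), α b (f • l) = f • α b l + a b f • l)
    (ρ : B [⋀^Fin 2]→ₗ[R] L)
    (hF : ∀ (b₁ b₂ : B) (l : L),
      α b₁ (α b₂ l) - α b₂ (α b₁ l) - α ⁅b₁, b₂⁆ l = ⁅ρ ![b₁, b₂], l⁆) :
    ∀ s : Fin 4 → B,
      dform (fun b x => α b x) 3 (dform (fun b x => α b x) 2 ⇑ρ) s = 0 := by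
  intro s
  -- derived facts about ρ
  have hρ1 : ∀ x y z : B, ρ ![x - y, z] = ρ ![x, z] - ρ ![y, z] := by
    intro x y z
    have h := ρ.toMultilinearMap.map_update_sub ![x, z] 0 x y
    simpa [update_cons_zero] using h
  have hswap : ∀ x y : B, ρ ![x, y] = -ρ ![y, x] := by
    intro x y
    have h := ρ.map_swap ![y, x] (show (0 : Fin 2) ≠ 1 by decide)
    have e : (![y, x] ∘ Equiv.swap (0 : Fin 2) 1) = ![x, y] := by
      funext m; fin_cases m <;> rfl
    rw [e] at h
    exact h
  have hsplit : ∀ x y z w : B, ρ ![⁅⁅x, y⁆, z⁆, w] = ρ ![⁅⁅x, z⁆, y⁆, w] - ρ ![⁅⁅y, z⁆, x⁆, w] := by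
    intro x y z w
    rw [jac_lie x y z, hρ1]
  have hF' : ∀ (b₁ b₂ : B) (l : L),
      α b₂ (α b₁ l) = α b₁ (α b₂ l) - α ⁅b₁, b₂⁆ l - ⁅ρ ![b₁, b₂], l⁆ := by
    intro b₁ b₂ l
    rw [← hF b₁ b₂ l]
    abel
  rw [dform3]
  simp only [dform2, Matrix.cons_val_zero, Matrix.cons_val_one, Matrix.head_cons,
    Matrix.cons_val_two, Matrix.tail_cons, map_add, map_sub, map_neg]
  rw [hF' (s 0) (s 1) (ρ ![s 2, s 3]), hF' (s 0) (s 2) (ρ ![s 1, s 3]),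
      hF' (s 1) (s 2) (ρ ![s 0, s 3]), hF' (s 0) (s 3) (ρ ![s 1, s 2]),
      hF' (s 1) (s 3) (ρ ![s 0, s 2]), hF' (s 2) (s 3) (ρ ![s 0, s 1])]
  -- orient the ⁅ρ,ρ⁆ atoms
  rw [show ⁅ρ ![s 2, s 3], ρ ![s 0, s 1]⁆ = -⁅ρ ![s 0, s 1], ρ ![s 2, s 3]⁆ from
        (lie_skew _ _).symm,
      show ⁅ρ ![s 1, s 3], ρ ![s 0, s 2]⁆ = -⁅ρ ![s 0, s 2], ρ ![s 1, s 3]⁆ from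
        (lie_skew _ _).symm,
      show ⁅ρ ![s 1, s 2], ρ ![s 0, s 3]⁆ = -⁅ρ ![s 0, s 3], ρ ![s 1, s 2]⁆ from
        (lie_skew _ _).symm]
  -- orient the ρ of bracket-bracket atoms
  rw [hswap ⁅s 2, s 3⁆ ⁅s 0, s 1⁆, hswap ⁅s 1, s 3⁆ ⁅s 0, s 2⁆, hswap ⁅s 1, s 2⁆ ⁅s 0, s 3⁆]
  -- split the double-bracket atoms via Jacobi
  rw [hsplit (s 0) (s 1) (s 2) (s 3), hsplit (s 0) (s 1) (s 3) (s 2),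
      hsplit (s 0) (s 2) (s 3) (s 1), hsplit (s 1) (s 2) (s 3) (s 0)]
  abel
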